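/- Every 3-colorable simple graph admits a semi-transitive orientation: orienting each edge from the vertex with smaller color class index to the vertex with larger color class index yields a semi-transitive orientation. -/

import Mathlib

/-- `o` is an orientation of the simple graph `G`: each edge gets exactly one direction. -/
def IsOrientation {V : Type*} (G : SimpleGraph V) (o : V → V → Prop) : Prop :=
  (∀ u v, o u v → G.Adj u v) ∧ (∀ u v, G.Adj u v → (o u v ∨ o v u)) ∧
    (∀ u v, o u v → ¬ o v u)

/-- An orientation (relation) is acyclic if there is no directed cycle. -/
def IsAcyclic {V : Type*} (o : V → V → Prop) : Prop :=
  Irreflexive (Relation.TransGen o)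

/-- Semi-transitive: acyclic, and every directed path `u₁ → ⋯ → u_{t+1}` together with a
shortcut edge `u₁ → u_{t+1}` forces all edges `u_i → u_j` for `i < j`. -/
def SemiTransitive {V : Type*} (o : V → V → Prop) : Prop :=
  IsAcyclic o ∧ ∀ (t : ℕ) (f : Fin (t + 1) → V),
    (∀ i : Fin t, o (f i.castSucc) (f i.succ)) →
    o (f 0) (f (Fin.last t)) →
    ∀ i j : Fin (t + 1), i < j → o (f i) (f j)

/-- The wheel graph `W_n`: cycle `C_n` plus a hub (`none`) adjacent to all rim vertices. -/
def wheelGraph (n : ℕ) : SimpleGraph (Option (Fin n)) where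
  Adj x y :=
    match x, y with
    | none, none => False
    | none, some _ => True
    | some _, none => True
    | some i, some j => (SimpleGraph.cycleGraph n).Adj i j
  symm := by
    constructor
    intro x y h
    match x, y with
    | none, some _ => trivial
    | some _, none => trivial
    | some i, some j => exact ((SimpleGraph.cycleGraph n).symm.symm _ _ h)
  loopless := by
    constructor
    intro x
    match x with
    | none => exact fun h => h
    | some i => exact fun h => (SimpleGraph.cycleGraph n).loopless.irrefl i h

/-- Two letters alternate in a word: the restriction of the word to their occurrences has
no two equal consecutive letters. -/
def Alternate {V : Type*} [DecidableEq V] (w : List V) (x y : V) : Prop :=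
  (w.filter fun z => decide (z = x ∨ z = y)).Chain' (· ≠ ·)

/-- A word `w` represents a graph `G`: every vertex occurs in `w`, and two distinct
vertices alternate in `w` iff they are adjacent in `G`. -/
def Represents {V : Type*} [DecidableEq V] (w : List V) (G : SimpleGraph V) : Prop :=
  (∀ v : V, v ∈ w) ∧ ∀ x y : V, x ≠ y → (Alternate w x y ↔ G.Adj x y)

/-- A comparability graph: admits a transitive orientation. -/
def IsComparabilityGraph {V : Type*} (G : SimpleGraph V) : Prop :=
  ∃ o : V → V → Prop, IsOrientation G o ∧ Transitive o

/-- Abstract combinatorial structure of a near-triangulation: a graph together with a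
set of inner vertices such that the neighborhood of every inner vertex induces a cycle
of length equal to its degree. (Planarity is not available in Mathlib, so a
near-triangulation is abstracted by this key structural property.) -/
def IsNearTriangulation {V : Type*} [Fintype V] (G : SimpleGraph V) [DecidableRel G.Adj]
    (inner : Set V) : Prop :=
  ∀ v ∈ inner, 3 ≤ G.degree v ∧
    Nonempty ((G.induce (G.neighborSet v)) ≃g SimpleGraph.cycleGraph (G.degree v))

/-- `G` contains an induced copy of `H`. -/
def HasInducedCopy {V W : Type*} (G : SimpleGraph V) (H : SimpleGraph W) : Prop :=
  ∃ s : Set V, Nonempty ((G.induce s) ≃g H)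

/-- every 3-colorable graph admits a semi-transitive orientation; indeed,
orienting every edge from the smaller color to the larger color is semi-transitive. -/
theorem threeColorable_semiTransitive {V : Type*} (G : SimpleGraph V)
    (c : G.Coloring (Fin 3)) :
    IsOrientation G (fun u v => G.Adj u v ∧ c u < c v) ∧
      SemiTransitive (fun u v => G.Adj u v ∧ c u < c v) := by
  set o := fun u v => G.Adj u v ∧ c u < c v with ho
  have horient : IsOrientation G o := by
    refine ⟨fun u v h => h.1, fun u v h => ?_, fun u v h => ?_⟩
    · rcases lt_or_gt_of_ne (c.valid h) with hlt | hgt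
      · exact Or.inl ⟨h, hlt⟩
      · exact Or.inr ⟨h.symm, hgt⟩
    · rintro ⟨_, hlt⟩
      exact absurd h.2 (not_lt.mpr hlt.le)
  have hmono : ∀ u v, Relation.TransGen o u v → c u < c v := by
    intro u v h
    induction h with
    | single h => exact h.2
    | tail _ h ih => exact ih.trans h.2
  refine ⟨horient, fun x hx => lt_irrefl _ (hmono x x hx), ?_⟩
  intro t f hchain hshort i j hij
  have hsm : StrictMono (fun i : Fin (t + 1) => c (f i)) := by
    rw [Fin.strictMono_iff_lt_succ]
    intro k
    exact (hchain k).2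
  have hcard : t + 1 ≤ 3 := by
    simpa using Fintype.card_le_of_injective _ hsm.injective
  match t, f, hchain, hshort, i, j, hij with
  | 0, f, hchain, hshort, i, j, hij => exact absurd hij (by omega)
  | 1, f, hchain, hshort, i, j, hij =>
    fin_cases i <;> fin_cases j <;> simp_all <;>
      first
        | exact hchain 0
        | exact hshort
  | 2, f, hchain, hshort, i, j, hij =>
    fin_cases i <;> fin_cases j <;> simp_all <;>
      first
        | exact hchain 0
        | exact hchain 1
        | exact hshort
  | n + 3, _, _, _, _, _, _ => omega
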